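/- Let M be a finite ultrametric space with n+1 points. Then the Banach–Mazur distance between the Lipschitz free space F(M) and ℓ₁^n is at most 8. -/

import Mathlib

open Finset

/-- The Lipschitz-free (Kantorovich–Rubinstein) norm of a molecule on a finite
metric space, expressed via duality with `1`-Lipschitz functions. -/
noncomputable def freeNorm (M : Type*) [MetricSpace M] [Fintype M] (m : M → ℝ) : ℝ :=
  sSup {r : ℝ | ∃ f : M → ℝ, LipschitzWith 1 f ∧ r = ∑ p, m p * f p}

/-- Molecules: the underlying vector space of the Lipschitz free space on a finite space;
equipped with `freeNorm` it is the Lipschitz free space `F(M)`. -/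
def molecules (M : Type*) [Fintype M] : Submodule ℝ (M → ℝ) where
  carrier := {m | ∑ p, m p = 0}
  add_mem' := by
    intro a b ha hb
    simp only [Set.mem_setOf_eq, Pi.add_apply, Finset.sum_add_distrib] at *
    rw [ha, hb]; ring
  zero_mem' := by simp
  smul_mem' := by
    intro c a ha
    simp only [Set.mem_setOf_eq, Pi.smul_apply, smul_eq_mul, ← Finset.mul_sum] at *
    rw [ha]; ring

/-- The norm of `ℓ₁^k`. -/
def l1norm {k : ℕ} (x : Fin k → ℝ) : ℝ := ∑ i, |x i|


open scoped Classical

namespace S2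
variable {n : ℕ}

variable {n : ℕ}

noncomputable def DD (dd : Fin (n+1) → Fin (n+1) → ℝ) (i j : Fin (n+1)) : ℝ :=
  if i = j then 0 else (2:ℝ) ^ ((⌈Real.logb 2 (dd i j)⌉ : ℤ) : ℝ)

lemma DD_nonneg (dd : Fin (n+1) → Fin (n+1) → ℝ) (i j : Fin (n+1)) : 0 ≤ DD dd i j := by
  unfold DD; split
  · exact le_rfl
  · positivity

lemma DD_self (dd : Fin (n+1) → Fin (n+1) → ℝ) (i : Fin (n+1)) : DD dd i i = 0 := by
  simp [DD]

lemma DD_pos (dd : Fin (n+1) → Fin (n+1) → ℝ) {i j : Fin (n+1)} (h : i ≠ j) : 0 < DD dd i j := by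
  unfold DD; rw [if_neg h]; positivity

lemma dd_le_DD (dd : Fin (n+1) → Fin (n+1) → ℝ) (hpos : ∀ i j, i ≠ j → 0 < dd i j)
    {i j : Fin (n+1)} (h : i ≠ j) : dd i j ≤ DD dd i j := by
  unfold DD; rw [if_neg h]
  have h1 : dd i j = (2:ℝ) ^ (Real.logb 2 (dd i j)) :=
    (Real.rpow_logb (by norm_num) (by norm_num) (hpos i j h)).symm
  calc dd i j = (2:ℝ) ^ (Real.logb 2 (dd i j)) := h1
    _ ≤ (2:ℝ) ^ ((⌈Real.logb 2 (dd i j)⌉ : ℤ) : ℝ) := by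
        apply Real.rpow_le_rpow_of_exponent_le (by norm_num)
        exact_mod_cast Int.le_ceil _

lemma DD_le_two_dd (dd : Fin (n+1) → Fin (n+1) → ℝ) (hpos : ∀ i j, i ≠ j → 0 < dd i j)
    {i j : Fin (n+1)} (h : i ≠ j) : DD dd i j ≤ 2 * dd i j := by
  unfold DD; rw [if_neg h]
  have h1 : ((⌈Real.logb 2 (dd i j)⌉ : ℤ) : ℝ) ≤ Real.logb 2 (dd i j) + 1 :=
    le_of_lt (Int.ceil_lt_add_one _)
  calc (2:ℝ) ^ ((⌈Real.logb 2 (dd i j)⌉ : ℤ) : ℝ)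
      ≤ (2:ℝ) ^ (Real.logb 2 (dd i j) + 1) :=
        Real.rpow_le_rpow_of_exponent_le (by norm_num) h1
    _ = 2 * dd i j := by
        rw [Real.rpow_add (by norm_num), Real.rpow_one,
          Real.rpow_logb (by norm_num) (by norm_num) (hpos i j h)]
        ring

lemma DD_symm (dd : Fin (n+1) → Fin (n+1) → ℝ) (hsymm : ∀ i j, dd i j = dd j i)
    (i j : Fin (n+1)) : DD dd i j = DD dd j i := by
  unfold DD
  rw [hsymm i j]
  by_cases h : i = j
  · simp [h]
  · rw [if_neg h, if_neg (Ne.symm h)]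

lemma DD_mono (dd : Fin (n+1) → Fin (n+1) → ℝ) (hpos : ∀ i j, i ≠ j → 0 < dd i j)
    {i j u v : Fin (n+1)} (hij : i ≠ j) (huv : u ≠ v) (hle : dd i j ≤ dd u v) :
    DD dd i j ≤ DD dd u v := by
  unfold DD; rw [if_neg hij, if_neg huv]
  apply Real.rpow_le_rpow_of_exponent_le (by norm_num)
  exact_mod_cast Int.ceil_le_ceil (Real.logb_le_logb_of_le (by norm_num) (hpos i j hij) hle)

lemma DD_gap (dd : Fin (n+1) → Fin (n+1) → ℝ) {i j u v : Fin (n+1)}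
    (hlt : DD dd i j < DD dd u v) : 2 * DD dd i j ≤ DD dd u v := by
  by_cases hij : i = j
  · rw [hij, DD_self] at *; linarith [DD_nonneg dd u v]
  by_cases huv : u = v
  · exfalso; rw [huv, DD_self] at hlt; linarith [DD_nonneg dd i j]
  unfold DD at *
  rw [if_neg hij, if_neg huv] at *
  set a : ℤ := ⌈Real.logb 2 (dd i j)⌉
  set b : ℤ := ⌈Real.logb 2 (dd u v)⌉
  have hab : (a:ℝ) < (b:ℝ) := by
    by_contra hc
    push_neg at hc
    exact absurd (Real.rpow_le_rpow_of_exponent_le (by norm_num) hc) (not_le.mpr hlt)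
  have hab' : a + 1 ≤ b := by exact_mod_cast Int.add_one_le_iff.mpr (by exact_mod_cast hab)
  calc 2 * (2:ℝ) ^ ((a:ℤ):ℝ) = (2:ℝ) ^ (((a:ℤ):ℝ) + 1) := by
        rw [Real.rpow_add (by norm_num), Real.rpow_one]; ring
    _ ≤ (2:ℝ) ^ ((b:ℤ):ℝ) := by
        apply Real.rpow_le_rpow_of_exponent_le (by norm_num)
        exact_mod_cast hab'

lemma DD_ultra (dd : Fin (n+1) → Fin (n+1) → ℝ) (hpos : ∀ i j, i ≠ j → 0 < dd i j)
    (hultra : ∀ i j k, dd i k ≤ max (dd i j) (dd j k))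
    (i j k : Fin (n+1)) : DD dd i k ≤ max (DD dd i j) (DD dd j k) := by
  by_cases hik : i = k
  · rw [hik, DD_self]
    exact le_max_of_le_left (DD_nonneg dd k j)
  by_cases hij : i = j
  · subst hij; exact le_max_right _ _
  by_cases hjk : j = k
  · subst hjk; exact le_max_left _ _
  rcases max_cases (dd i j) (dd j k) with ⟨heq, _⟩ | ⟨heq, _⟩
  · exact le_max_of_le_left (DD_mono dd hpos hik hij (le_of_le_of_eq (hultra i j k) heq))
  · exact le_max_of_le_right (DD_mono dd hpos hik hjk (le_of_le_of_eq (hultra i j k) heq))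


def A (i : Fin (n+1)) : Finset (Fin (n+1)) := univ.filter (· < i)

lemma A_nonempty {i : Fin (n+1)} (h : i ≠ 0) : (A i).Nonempty :=
  ⟨0, by simp [A, Fin.pos_of_ne_zero h]⟩

noncomputable def mu (dd : Fin (n+1) → Fin (n+1) → ℝ) (i : Fin (n+1)) : ℝ :=
  if h : i = 0 then 0 else (A i).inf' (A_nonempty h) (DD dd i)

/-- the ball of radius s around i -/
noncomputable def Bl (dd : Fin (n+1) → Fin (n+1) → ℝ) (s : ℝ) (i : Fin (n+1)) :
    Finset (Fin (n+1)) := univ.filter (fun j => DD dd i j ≤ s)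

lemma mem_Bl {dd : Fin (n+1) → Fin (n+1) → ℝ} {s : ℝ} {i j : Fin (n+1)} :
    j ∈ Bl dd s i ↔ DD dd i j ≤ s := by simp [Bl]

lemma self_mem_Bl {dd : Fin (n+1) → Fin (n+1) → ℝ} {s : ℝ} {i : Fin (n+1)} (hs : 0 ≤ s) :
    i ∈ Bl dd s i := mem_Bl.mpr (by rw [DD_self]; exact hs)

lemma mu_nonneg (dd : Fin (n+1) → Fin (n+1) → ℝ) (i : Fin (n+1)) : 0 ≤ mu dd i := by
  unfold mu; split
  · exact le_rfl
  · rw [Finset.le_inf'_iff]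
    intro j _; exact DD_nonneg dd i j

lemma mu_le (dd : Fin (n+1) → Fin (n+1) → ℝ) {i j : Fin (n+1)} (hi : i ≠ 0) (hj : j < i) :
    mu dd i ≤ DD dd i j := by
  unfold mu; rw [dif_neg hi]
  exact Finset.inf'_le _ (by simp [A, hj])

lemma exists_mu (dd : Fin (n+1) → Fin (n+1) → ℝ) {i : Fin (n+1)} (hi : i ≠ 0) :
    ∃ j, j < i ∧ DD dd i j = mu dd i := by
  obtain ⟨j, hj, hje⟩ := Finset.exists_mem_eq_inf' (A_nonempty hi) (DD dd i)
  refine ⟨j, by simpa [A] using hj, ?_⟩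
  rw [mu, dif_neg hi, hje]

lemma Bl_mu_nonempty (dd : Fin (n+1) → Fin (n+1) → ℝ) {i : Fin (n+1)} (hi : i ≠ 0) :
    (Bl dd (mu dd i) i).Nonempty := by
  obtain ⟨j, _, hje⟩ := exists_mu dd hi
  exact ⟨j, mem_Bl.mpr hje.le⟩

noncomputable def par (dd : Fin (n+1) → Fin (n+1) → ℝ) (i : Fin (n+1)) : Fin (n+1) :=
  if h : i = 0 then 0 else (Bl dd (mu dd i) i).min' (Bl_mu_nonempty dd h)

lemma par_lt (dd : Fin (n+1) → Fin (n+1) → ℝ) {i : Fin (n+1)} (hi : i ≠ 0) :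
    par dd i < i := by
  obtain ⟨j, hj, hje⟩ := exists_mu dd hi
  rw [par, dif_neg hi]
  exact lt_of_le_of_lt (Finset.min'_le _ j (mem_Bl.mpr hje.le)) hj

lemma DD_par_le (dd : Fin (n+1) → Fin (n+1) → ℝ) {i : Fin (n+1)} (hi : i ≠ 0) :
    DD dd i (par dd i) ≤ mu dd i := by
  rw [par, dif_neg hi]
  exact mem_Bl.mp (Finset.min'_mem _ _)

lemma DD_par (dd : Fin (n+1) → Fin (n+1) → ℝ) {i : Fin (n+1)} (hi : i ≠ 0) :
    DD dd i (par dd i) = mu dd i :=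
  le_antisymm (DD_par_le dd hi) (mu_le dd hi (par_lt dd hi))

lemma par_min (dd : Fin (n+1) → Fin (n+1) → ℝ) {i j : Fin (n+1)} (hi : i ≠ 0)
    (hj : DD dd i j ≤ mu dd i) : par dd i ≤ j := by
  rw [par, dif_neg hi]
  exact Finset.min'_le _ j (mem_Bl.mpr hj)

lemma mu_doubling (dd : Fin (n+1) → Fin (n+1) → ℝ) (hsymm : ∀ i j, dd i j = dd j i)
    (hultra : ∀ i j k, dd i k ≤ max (dd i j) (dd j k))
    (hpos : ∀ i j, i ≠ j → 0 < dd i j)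
    {i : Fin (n+1)} (hi : i ≠ 0) (hpi : par dd i ≠ 0) :
    2 * mu dd i ≤ mu dd (par dd i) := by
  have hlt : mu dd i < mu dd (par dd i) := by
    by_contra hc
    push_neg at hc
    obtain ⟨j, hj, hje⟩ := exists_mu dd hpi
    have hij : DD dd i j ≤ mu dd i := by
      calc DD dd i j ≤ max (DD dd i (par dd i)) (DD dd (par dd i) j) :=
            DD_ultra dd hpos hultra i (par dd i) j
        _ ≤ mu dd i := by
            apply max_le (DD_par_le dd hi)
            rw [hje]; exact hc
    exact absurd (par_min dd hi hij) (not_le.mpr hj)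
  obtain ⟨j, _, hje⟩ := exists_mu dd hpi
  have h2 : DD dd i (par dd i) < DD dd (par dd i) j := by
    rw [DD_par dd hi, hje]; exact hlt
  calc 2 * mu dd i = 2 * DD dd i (par dd i) := by rw [DD_par dd hi]
    _ ≤ DD dd (par dd i) j := DD_gap dd h2
    _ = mu dd (par dd i) := hje

noncomputable def chain (dd : Fin (n+1) → Fin (n+1) → ℝ) (t : Fin (n+1) → ℝ) :
    Fin (n+1) → ℝ
  | i => if h : i = 0 then 0 else chain dd t (par dd i) + t i
termination_by i => i.val
decreasing_by exact par_lt dd h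

lemma chain_eq (dd : Fin (n+1) → Fin (n+1) → ℝ) (t : Fin (n+1) → ℝ) (i : Fin (n+1)) :
    chain dd t i = if h : i = 0 then 0 else chain dd t (par dd i) + t i := by
  rw [chain]


lemma Bl_eq (dd : Fin (n+1) → Fin (n+1) → ℝ) (hsymm : ∀ i j, dd i j = dd j i)
    (hpos : ∀ i j, i ≠ j → 0 < dd i j)
    (hultra : ∀ i j k, dd i k ≤ max (dd i j) (dd j k))
    {i j : Fin (n+1)} {s : ℝ} (hij : DD dd i j ≤ s) : Bl dd s i = Bl dd s j := by
  ext k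
  simp only [mem_Bl]
  constructor
  · intro hk
    calc DD dd j k ≤ max (DD dd j i) (DD dd i k) := DD_ultra dd hpos hultra j i k
      _ ≤ s := max_le (by rw [← DD_symm dd hsymm]; exact hij) hk
  · intro hk
    calc DD dd i k ≤ max (DD dd i j) (DD dd j k) := DD_ultra dd hpos hultra i j k
      _ ≤ s := max_le hij hk

lemma chain_bound (dd : Fin (n+1) → Fin (n+1) → ℝ) (hsymm : ∀ i j, dd i j = dd j i)
    (hpos : ∀ i j, i ≠ j → 0 < dd i j)
    (hultra : ∀ i j k, dd i k ≤ max (dd i j) (dd j k))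
    (t : Fin (n+1) → ℝ) (ht : ∀ i, i ≠ 0 → |t i| ≤ mu dd i) :
    ∀ (k : ℕ) (i : Fin (n+1)), i.val ≤ k → ∀ (s : ℝ) (r : Fin (n+1)), 0 ≤ s →
      r ∈ Bl dd s i → (∀ j ∈ Bl dd s i, r ≤ j) → r ≠ i →
      |chain dd t i - chain dd t r| ≤ 2*s - mu dd i := by
  intro k
  induction k with
  | zero =>
    intro i hik s r hs hrm hrmin hri
    exfalso
    have hi0 : i = 0 := Fin.ext (Nat.le_zero.mp hik)
    have : r < i := lt_of_le_of_ne (hrmin i (self_mem_Bl hs)) hri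
    rw [hi0] at this
    exact absurd this (Fin.not_lt_zero r)
  | succ k IH =>
    intro i hik s r hs hrm hrmin hri
    have hri' : r < i := lt_of_le_of_ne (hrmin i (self_mem_Bl hs)) hri
    have hi0 : i ≠ 0 := by
      intro h; rw [h] at hri'; exact absurd hri' (Fin.not_lt_zero r)
    have hmus : mu dd i ≤ s := le_trans (mu_le dd hi0 hri') (mem_Bl.mp hrm)
    have hDDp : DD dd i (par dd i) ≤ s := le_trans (DD_par_le dd hi0) hmus
    have hBleq : Bl dd s i = Bl dd s (par dd i) := Bl_eq dd hsymm hpos hultra hDDp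
    have hchain : chain dd t i = chain dd t (par dd i) + t i := by
      rw [chain_eq, dif_neg hi0]
    have hti : |t i| ≤ mu dd i := ht i hi0
    by_cases hpr : par dd i = r
    · rw [hchain, hpr]
      have heq : chain dd t r + t i - chain dd t r = t i := by ring
      rw [heq]
      linarith
    · have hrp : r < par dd i := by
        refine lt_of_le_of_ne ?_ (Ne.symm hpr)
        exact hrmin (par dd i) (mem_Bl.mpr hDDp)
      have hp0 : par dd i ≠ 0 := by
        intro h; rw [h] at hrp; exact absurd hrp (Fin.not_lt_zero r)
      have hkle : (par dd i).val ≤ k := by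
        have h1 : (par dd i).val < i.val := par_lt dd hi0
        omega
      have hIH := IH (par dd i) hkle s r hs (hBleq ▸ hrm)
        (fun j hj => hrmin j (hBleq ▸ hj)) (ne_of_lt hrp)
      have hdb := mu_doubling dd hsymm hultra hpos hi0 hp0
      calc |chain dd t i - chain dd t r|
          = |t i + (chain dd t (par dd i) - chain dd t r)| := by rw [hchain]; ring_nf
        _ ≤ |t i| + |chain dd t (par dd i) - chain dd t r| := abs_add_le _ _
        _ ≤ mu dd i + (2*s - mu dd (par dd i)) := add_le_add hti hIH
        _ ≤ 2*s - mu dd i := by linarith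

lemma chain_lip (dd : Fin (n+1) → Fin (n+1) → ℝ) (hsymm : ∀ i j, dd i j = dd j i)
    (hpos : ∀ i j, i ≠ j → 0 < dd i j) (hzero : ∀ i, dd i i = 0)
    (hultra : ∀ i j k, dd i k ≤ max (dd i j) (dd j k))
    (t : Fin (n+1) → ℝ) (ht : ∀ i, i ≠ 0 → |t i| ≤ mu dd i) (u v : Fin (n+1)) :
    |chain dd t u - chain dd t v| ≤ 8 * dd u v := by
  by_cases huv : u = v
  · rw [huv, hzero]; simp
  have hs : (0:ℝ) ≤ DD dd u v := DD_nonneg dd u v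
  set s := DD dd u v with hsdef
  have hune : (Bl dd s u).Nonempty := ⟨u, self_mem_Bl hs⟩
  set r := (Bl dd s u).min' hune with hrdef
  have hrm : r ∈ Bl dd s u := Finset.min'_mem _ _
  have hrmin : ∀ j ∈ Bl dd s u, r ≤ j := fun j hj => Finset.min'_le _ j hj
  have hBluv : Bl dd s u = Bl dd s v := Bl_eq dd hsymm hpos hultra le_rfl
  have hb1 : |chain dd t u - chain dd t r| ≤ 2*s := by
    by_cases hru : r = u
    · rw [hru]; simp [hs]
    · calc |chain dd t u - chain dd t r| ≤ 2*s - mu dd u :=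
            chain_bound dd hsymm hpos hultra t ht u.val u le_rfl s r hs hrm hrmin hru
        _ ≤ 2*s := by linarith [mu_nonneg dd u]
  have hb2 : |chain dd t v - chain dd t r| ≤ 2*s := by
    by_cases hrv : r = v
    · rw [hrv]; simp [hs]
    · calc |chain dd t v - chain dd t r| ≤ 2*s - mu dd v :=
            chain_bound dd hsymm hpos hultra t ht v.val v le_rfl s r hs (hBluv ▸ hrm)
              (fun j hj => hrmin j (hBluv ▸ hj)) hrv
        _ ≤ 2*s := by linarith [mu_nonneg dd v]
  have htri : |chain dd t u - chain dd t v| ≤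
      |chain dd t u - chain dd t r| + |chain dd t v - chain dd t r| := by
    calc |chain dd t u - chain dd t v|
        ≤ |chain dd t u - chain dd t r| + |chain dd t r - chain dd t v| :=
          abs_sub_le _ _ _
      _ = |chain dd t u - chain dd t r| + |chain dd t v - chain dd t r| := by
          rw [abs_sub_comm (chain dd t r)]
  have h4 : |chain dd t u - chain dd t v| ≤ 4 * s := by linarith
  calc |chain dd t u - chain dd t v| ≤ 4 * s := h4
    _ ≤ 4 * (2 * dd u v) := by
        have := DD_le_two_dd dd hpos huv
        linarith
    _ = 8 * dd u v := by ring


section Main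
variable {M : Type*} [Fintype M] [MetricSpace M] (e : M ≃ Fin (n+1))

noncomputable def dd : Fin (n+1) → Fin (n+1) → ℝ := fun i j => dist (e.symm i) (e.symm j)

noncomputable def X (j : Fin n) : M := e.symm j.succ

noncomputable def PX (j : Fin n) : M := e.symm (par (dd e) j.succ)

noncomputable def W (j : Fin n) : ℝ := dist (X e j) (PX e j)

noncomputable def uu (j : Fin n) : M → ℝ :=
  fun p => (if p = X e j then 1 else 0) - (if p = PX e j then 1 else 0)

lemma par_succ_lt (j : Fin n) : par (dd e) j.succ < j.succ :=
  par_lt (dd e) (Fin.succ_ne_zero j)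

lemma X_ne_PX (j : Fin n) : X e j ≠ PX e j := by
  intro h
  have h2 : j.succ = par (dd e) j.succ := e.symm.injective h
  have h3 := par_succ_lt e j
  rw [← h2] at h3
  exact lt_irrefl _ h3

lemma W_pos (j : Fin n) : 0 < W e j := dist_pos.mpr (X_ne_PX e j)

lemma mem_molecules {m : M → ℝ} : m ∈ molecules M ↔ ∑ p, m p = 0 := Iff.rfl

lemma uu_mem (j : Fin n) : uu e j ∈ molecules M := by
  rw [mem_molecules]
  simp [uu, Finset.sum_sub_distrib, Finset.sum_ite_eq']

noncomputable def UU (j : Fin n) : molecules M := ⟨uu e j, uu_mem e j⟩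

noncomputable def Smap : (Fin n → ℝ) →ₗ[ℝ] molecules M where
  toFun c := ∑ j, (8 * c j / W e j) • UU e j
  map_add' a b := by
    rw [← Finset.sum_add_distrib]
    apply Finset.sum_congr rfl
    intro j _
    rw [← add_smul]
    congr 1
    simp [add_div, mul_add]
  map_smul' r a := by
    simp only [RingHom.id_apply, Finset.smul_sum, smul_smul]
    apply Finset.sum_congr rfl
    intro j _
    congr 1
    simp only [Pi.smul_apply, smul_eq_mul]
    ring

lemma Smap_coe (c : Fin n → ℝ) (p : M) :
    ((Smap e c : molecules M) : M → ℝ) p = ∑ j, (8 * c j / W e j) * uu e j p := by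
  show ((∑ j, (8 * c j / W e j) • UU e j : molecules M) : M → ℝ) p = _
  rw [AddSubmonoidClass.coe_finset_sum]
  rw [Finset.sum_apply]
  apply Finset.sum_congr rfl
  intro j _
  simp [UU]

lemma sum_mul_f (β : Fin n → ℝ) (f : M → ℝ) :
    ∑ p, (∑ j, β j * uu e j p) * f p = ∑ j, β j * (f (X e j) - f (PX e j)) := by
  have h1 : ∀ p : M, (∑ j, β j * uu e j p) * f p = ∑ j, β j * uu e j p * f p :=
    fun p => Finset.sum_mul _ _ _
  rw [Finset.sum_congr rfl (fun p _ => h1 p), Finset.sum_comm]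
  apply Finset.sum_congr rfl
  intro j _
  have h2 : ∀ p : M, β j * uu e j p * f p =
      β j * ((if p = X e j then f p else 0) - (if p = PX e j then f p else 0)) := by
    intro p
    unfold uu
    by_cases hx : p = X e j <;> by_cases hy : p = PX e j
    · rw [if_pos hx, if_pos hy, if_pos hx, if_pos hy]; ring
    · rw [if_pos hx, if_neg hy, if_pos hx, if_neg hy]; ring
    · rw [if_neg hx, if_pos hy, if_neg hx, if_pos hy]; ring
    · rw [if_neg hx, if_neg hy, if_neg hx, if_neg hy]; ring
  rw [Finset.sum_congr rfl (fun p _ => h2 p), ← Finset.mul_sum]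
  congr 1
  rw [Finset.sum_sub_distrib, Finset.sum_ite_eq' univ (X e j) f,
    Finset.sum_ite_eq' univ (PX e j) f]
  simp

lemma Smap_inj : Function.Injective (Smap e) := by
  rw [injective_iff_map_eq_zero]
  intro c hc
  set β : Fin n → ℝ := fun j => 8 * c j / W e j with hβ
  have h0 : ∀ p : M, ∑ j, β j * uu e j p = 0 := by
    intro p
    have h := congrArg (fun m : molecules M => (m : M → ℝ) p) hc
    rw [Smap_coe] at h
    simpa using h
  have key : ∀ k : ℕ, ∀ j : Fin n, n - j.val ≤ k → c j = 0 := by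
    intro k
    induction k with
    | zero =>
      intro j hj
      exfalso
      have := j.isLt
      omega
    | succ k IH =>
      intro j hj
      have hX := h0 (X e j)
      have hsplit : ∀ j' : Fin n, β j' * uu e j' (X e j) =
          (if j' = j then β j' else 0) - (if X e j = PX e j' then β j' else 0) := by
        intro j'
        unfold uu
        have hcond : (X e j = X e j') ↔ (j' = j) := by
          constructor
          · intro h
            have := e.symm.injective h
            exact (Fin.succ_inj.mp this).symm
          · intro h; rw [h]
        rw [mul_sub]
        congr 1
        · by_cases h : j' = j
          · rw [if_pos (hcond.mpr h), if_pos h, mul_one]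
          · rw [if_neg (fun hh => h (hcond.mp hh)), if_neg h, mul_zero]
        · by_cases h : X e j = PX e j'
          · rw [if_pos h, if_pos h, mul_one]
          · rw [if_neg h, if_neg h, mul_zero]
      rw [Finset.sum_congr rfl (fun j' _ => hsplit j'), Finset.sum_sub_distrib] at hX
      have h1 : ∑ j' : Fin n, (if j' = j then β j' else 0) = β j := by
        rw [Finset.sum_ite_eq' univ j β]
        simp
      have h2 : ∑ j' : Fin n, (if X e j = PX e j' then β j' else 0) = 0 := by
        apply Finset.sum_eq_zero
        intro j' _
        by_cases h : X e j = PX e j'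
        · rw [if_pos h]
          have hlt : j < j' := by
            have h3 : j.succ = par (dd e) j'.succ := e.symm.injective h
            have h4 : j.succ < j'.succ := h3 ▸ par_succ_lt e j'
            exact Fin.succ_lt_succ_iff.mp h4
          have hc0 : c j' = 0 := by
            apply IH j'
            have : j.val < j'.val := hlt
            omega
          rw [hβ]
          simp [hc0]
        · rw [if_neg h]
      rw [h1, h2, sub_zero] at hX
      have hW : W e j ≠ 0 := ne_of_gt (W_pos e j)
      rw [hβ] at hX
      simp only at hX
      rcases div_eq_zero_iff.mp hX with h | h
      · linarith [mul_self_nonneg (c j)]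
      · exact absurd h hW
  funext j
  exact key n j (by omega)

noncomputable def sumL (M : Type*) [Fintype M] : (M → ℝ) →ₗ[ℝ] ℝ where
  toFun m := ∑ p, m p
  map_add' a b := by simp [Finset.sum_add_distrib]
  map_smul' r a := by simp [Finset.mul_sum]

lemma molecules_eq_ker : molecules M = LinearMap.ker (sumL M) := by
  ext m
  rw [mem_molecules, LinearMap.mem_ker]
  rfl

lemma finrank_molecules (hcard : Fintype.card M = n + 1) :
    Module.finrank ℝ (molecules M) = n := by
  have hne : Nonempty M := Fintype.card_pos_iff.mp (by omega)
  obtain ⟨x0⟩ := hne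
  have hsurj : Function.Surjective (sumL M) := by
    intro r
    refine ⟨fun p => if p = x0 then r else 0, ?_⟩
    show ∑ p, (if p = x0 then r else 0) = r
    rw [Finset.sum_ite_eq' univ x0 (fun _ => r)]
    simp
  have hr : LinearMap.range (sumL M) = ⊤ := LinearMap.range_eq_top.mpr hsurj
  have h1 := LinearMap.finrank_range_add_finrank_ker (sumL M)
  rw [hr, finrank_top] at h1
  have h2 : Module.finrank ℝ (M → ℝ) = n + 1 := by
    rw [Module.finrank_pi, hcard]
  have h3 : Module.finrank ℝ ℝ = 1 := Module.finrank_self ℝ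
  rw [h2, h3] at h1
  rw [molecules_eq_ker]
  omega

noncomputable def Tequiv (hcard : Fintype.card M = n + 1) :
    (Fin n → ℝ) ≃ₗ[ℝ] molecules M :=
  LinearMap.linearEquivOfInjective (Smap e) (Smap_inj e)
    (by rw [Module.finrank_fin_fun, finrank_molecules hcard])

lemma Tequiv_apply (hcard : Fintype.card M = n + 1) (c : Fin n → ℝ) :
    Tequiv e hcard c = Smap e c :=
  LinearMap.linearEquivOfInjective_apply _ _ _

lemma dd_symm : ∀ i j, dd e i j = dd e j i := fun _ _ => dist_comm _ _

lemma dd_zero : ∀ i, dd e i i = 0 := fun _ => dist_self _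

lemma dd_pos : ∀ i j, i ≠ j → 0 < dd e i j := fun i j h =>
  dist_pos.mpr (fun hc => h (by simpa using congrArg e hc))

lemma dd_nonneg (i j : Fin (n+1)) : 0 ≤ dd e i j := dist_nonneg

lemma pair_sum (c : Fin n → ℝ) (f : M → ℝ) :
    ∑ p, ((Smap e c : molecules M) : M → ℝ) p * f p
      = ∑ j, (8 * c j / W e j) * (f (X e j) - f (PX e j)) := by
  rw [Finset.sum_congr rfl (fun p _ => by rw [Smap_coe e c p])]
  exact sum_mul_f e _ f

lemma l1norm_nonneg {k : ℕ} (c : Fin k → ℝ) : 0 ≤ l1norm c :=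
  Finset.sum_nonneg (fun j _ => abs_nonneg _)

lemma upper (c : Fin n → ℝ) (f : M → ℝ) (hf : LipschitzWith 1 f) :
    ∑ p, ((Smap e c : molecules M) : M → ℝ) p * f p ≤ 8 * l1norm c := by
  rw [pair_sum]
  have hterm : ∀ j : Fin n, (8 * c j / W e j) * (f (X e j) - f (PX e j)) ≤ 8 * |c j| := by
    intro j
    have h1 : |f (X e j) - f (PX e j)| ≤ W e j := by
      have h := hf.dist_le_mul (X e j) (PX e j)
      rw [Real.dist_eq] at h
      simpa [W] using h
    calc (8 * c j / W e j) * (f (X e j) - f (PX e j))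
        ≤ |(8 * c j / W e j) * (f (X e j) - f (PX e j))| := le_abs_self _
      _ = |8 * c j / W e j| * |f (X e j) - f (PX e j)| := abs_mul _ _
      _ ≤ |8 * c j / W e j| * W e j :=
          mul_le_mul_of_nonneg_left h1 (abs_nonneg _)
      _ = 8 * |c j| := by
          rw [abs_div, abs_of_pos (W_pos e j), div_mul_cancel₀ _ (ne_of_gt (W_pos e j)),
            abs_mul]
          norm_num
  calc ∑ j, (8 * c j / W e j) * (f (X e j) - f (PX e j))
      ≤ ∑ j, 8 * |c j| := Finset.sum_le_sum (fun j _ => hterm j)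
    _ = 8 * l1norm c := by rw [l1norm, Finset.mul_sum]

noncomputable def sg (c : Fin n → ℝ) : Fin n → ℝ := fun j => if c j < 0 then -1 else 1

noncomputable def tt (c : Fin n → ℝ) : Fin (n+1) → ℝ :=
  fun i => if h : i = 0 then 0 else sg c (i.pred h) * dd e i (par (dd e) i)

noncomputable def ff (c : Fin n → ℝ) : M → ℝ :=
  fun p => (1/8) * chain (dd e) (tt e c) (e p)

lemma tt_succ (c : Fin n → ℝ) (j : Fin n) :
    tt e c j.succ = sg c j * dd e j.succ (par (dd e) j.succ) := by
  rw [tt]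
  simp only [dif_neg (Fin.succ_ne_zero j), Fin.pred_succ]

lemma tt_bound (c : Fin n → ℝ) : ∀ i, i ≠ 0 → |tt e c i| ≤ mu (dd e) i := by
  intro i hi
  rw [tt]
  simp only [dif_neg hi]
  rw [abs_mul]
  have hsg : |sg c (i.pred hi)| = 1 := by
    rw [sg]; split <;> simp
  rw [hsg, one_mul, abs_of_nonneg (dd_nonneg e _ _)]
  calc dd e i (par (dd e) i) ≤ DD (dd e) i (par (dd e) i) :=
        dd_le_DD _ (dd_pos e) (ne_of_gt (par_lt _ hi))
    _ = mu (dd e) i := DD_par _ hi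

lemma ff_lip (hu : ∀ x y z : M, dist x z ≤ max (dist x y) (dist y z)) (c : Fin n → ℝ) :
    LipschitzWith 1 (ff e c) := by
  apply LipschitzWith.of_dist_le_mul
  intro x y
  have h := chain_lip (dd e) (dd_symm e) (dd_pos e) (dd_zero e)
    (fun i j k => hu _ _ _) (tt e c) (tt_bound e c) (e x) (e y)
  have hdd : dd e (e x) (e y) = dist x y := by
    show dist (e.symm (e x)) (e.symm (e y)) = dist x y
    rw [Equiv.symm_apply_apply, Equiv.symm_apply_apply]
  calc dist (ff e c x) (ff e c y)
      = |(1/8) * chain (dd e) (tt e c) (e x) - (1/8) * chain (dd e) (tt e c) (e y)| :=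
        Real.dist_eq _ _
    _ = (1/8) * |chain (dd e) (tt e c) (e x) - chain (dd e) (tt e c) (e y)| := by
        rw [← mul_sub, abs_mul]; norm_num
    _ ≤ (1/8) * (8 * dd e (e x) (e y)) := by
        apply mul_le_mul_of_nonneg_left h (by norm_num)
    _ = 1 * dist x y := by rw [hdd]; ring

lemma ff_value (c : Fin n → ℝ) :
    ∑ p, ((Smap e c : molecules M) : M → ℝ) p * ff e c p = l1norm c := by
  rw [pair_sum, l1norm]
  apply Finset.sum_congr rfl
  intro j _
  have hXj : e (X e j) = j.succ := by rw [X, Equiv.apply_symm_apply]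
  have hPXj : e (PX e j) = par (dd e) j.succ := by rw [PX, Equiv.apply_symm_apply]
  have h1 : ff e c (X e j) - ff e c (PX e j) = (1/8) * tt e c j.succ := by
    simp only [ff]
    simp only [hXj, hPXj]
    rw [← mul_sub]
    congr 1
    rw [chain_eq (dd e) (tt e c) j.succ, dif_neg (Fin.succ_ne_zero j)]
    ring
  rw [h1, tt_succ]
  have hWd : dd e j.succ (par (dd e) j.succ) = W e j := rfl
  rw [hWd]
  have hW : W e j ≠ 0 := ne_of_gt (W_pos e j)
  rw [sg]
  by_cases h : c j < 0
  · rw [if_pos h, abs_of_neg h]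
    field_simp
  · rw [if_neg h, abs_of_nonneg (not_lt.mp h)]
    field_simp

lemma freeSet_bddAbove (x0 : M) (m : molecules M) :
    BddAbove {r : ℝ | ∃ f : M → ℝ, LipschitzWith 1 f ∧ r = ∑ p, (m : M → ℝ) p * f p} := by
  refine ⟨∑ p, |(m : M → ℝ) p| * dist p x0, ?_⟩
  rintro r ⟨f, hf, rfl⟩
  have hm : ∑ p, (m : M → ℝ) p = 0 := m.2
  have h1 : ∑ p, (m : M → ℝ) p * f p = ∑ p, (m : M → ℝ) p * (f p - f x0) := by
    simp only [mul_sub]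
    rw [Finset.sum_sub_distrib, ← Finset.sum_mul, hm, zero_mul, sub_zero]
  rw [h1]
  apply Finset.sum_le_sum
  intro p _
  calc (m : M → ℝ) p * (f p - f x0) ≤ |(m : M → ℝ) p * (f p - f x0)| := le_abs_self _
    _ = |(m : M → ℝ) p| * |f p - f x0| := abs_mul _ _
    _ ≤ |(m : M → ℝ) p| * dist p x0 := by
        apply mul_le_mul_of_nonneg_left ?_ (abs_nonneg _)
        have h := hf.dist_le_mul p x0
        rw [Real.dist_eq] at h
        simpa using h

end Main
end S2

theorem stmt2 {M : Type*} [Fintype M] [MetricSpace M] (n : ℕ)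
    (hcard : Fintype.card M = n + 1)
    (hultra : ∀ x y z : M, dist x z ≤ max (dist x y) (dist y z)) :
    ∃ T : molecules M ≃ₗ[ℝ] (Fin n → ℝ),
      ∀ m : molecules M, l1norm (T m) ≤ freeNorm M m ∧ freeNorm M m ≤ 8 * l1norm (T m) := by
  classical
  let e : M ≃ Fin (n+1) := Fintype.equivFinOfCardEq hcard
  refine ⟨(S2.Tequiv e hcard).symm, ?_⟩
  intro m
  set c : Fin n → ℝ := (S2.Tequiv e hcard).symm m with hc
  have hmc : S2.Smap e c = m := by
    rw [← S2.Tequiv_apply e hcard]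
    exact (S2.Tequiv e hcard).apply_symm_apply m
  constructor
  · have hval := S2.ff_value e c
    rw [hmc] at hval
    rw [freeNorm]
    exact le_csSup (S2.freeSet_bddAbove (e.symm 0) m) ⟨S2.ff e c, S2.ff_lip e hultra c, hval.symm⟩
  · rw [freeNorm]
    apply Real.sSup_le
    · rintro r ⟨f, hf, rfl⟩
      have h := S2.upper e c f hf
      rw [hmc] at h
      exact h
    · have := S2.l1norm_nonneg c
      linarith
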